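/- arXiv:2208.14310 — 3 statements merged into one kernel-verified Lean document; each statement's English description precedes it below -/
import Mathlib

section
/- Let d ≥ 1, let ρ be a separable density matrix on ℂ^d ⊗ ℂ^d, and let Ψ be a maximally entangled state on ℂ^d ⊗ ℂ^d. Then the expectation value satisfies ⟨Ψ, ρ Ψ⟩ ≤ 1/d. -/
open scoped Matrix Kronecker ComplexOrder

noncomputable section

/-- Hermitian inner product on `n → ℂ` (conjugate-linear in the first argument). -/
def cinner {n : Type*} [Fintype n] (v w : n → ℂ) : ℂ :=
  ∑ i, (starRingEnd ℂ) (v i) * w i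

/-- Tensor (Kronecker) product of vectors. -/
def tensorVec {α β : Type*} (v : α → ℂ) (w : β → ℂ) : α × β → ℂ :=
  fun p => v p.1 * w p.2

/-- The projector `|v⟩⟨v|`. -/
def vecProj {n : Type*} (v : n → ℂ) : Matrix n n ℂ :=
  Matrix.of fun i j => v i * (starRingEnd ℂ) (v j)

/-- A density matrix: positive semidefinite with unit trace. -/
def IsDensityMatrix {n : Type*} [Fintype n] (ρ : Matrix n n ℂ) : Prop :=
  ρ.PosSemidef ∧ ρ.trace = 1

open Classical in
/-- Positive semidefinite square root (0 on non-PSD input). -/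
def msqrt {n : Type*} [Fintype n] [DecidableEq n] (ρ : Matrix n n ℂ) : Matrix n n ℂ :=
  if h : ρ.PosSemidef then
    h.1.eigenvectorUnitary.1 * Matrix.diagonal ((↑) ∘ (√·) ∘ h.1.eigenvalues) *
      (star h.1.eigenvectorUnitary : Matrix n n ℂ)
  else 0

/-- Uhlmann root fidelity `F(ρ,σ) = tr √(√ρ σ √ρ)`. -/
def rootFidelity {n : Type*} [Fintype n] [DecidableEq n] (ρ σ : Matrix n n ℂ) : ℝ :=
  ((msqrt (msqrt ρ * σ * msqrt ρ)).trace).re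

/-- Partial trace over the second tensor factor. -/
def ptraceC {α γ : Type*} [Fintype γ] (ρ : Matrix (α × γ) (α × γ) ℂ) : Matrix α α ℂ :=
  Matrix.of fun i j => ∑ k, ρ (i, k) (j, k)

/-- Partial trace over the first tensor factor. -/
def ptraceA {α β : Type*} [Fintype α] (ρ : Matrix (α × β) (α × β) ℂ) : Matrix β β ℂ :=
  Matrix.of fun i j => ∑ k, ρ (k, i) (k, j)

/-- Partial transpose on the second tensor factor. -/
def ptB {α β : Type*} (ρ : Matrix (α × β) (α × β) ℂ) : Matrix (α × β) (α × β) ℂ :=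
  Matrix.of fun p q => ρ (p.1, q.2) (q.1, p.2)

open Classical in
/-- Negativity: the sum of the absolute values of the negative eigenvalues of
the partial transpose (0 if the partial transpose is not Hermitian). -/
def negativity {α β : Type*} [Fintype α] [Fintype β] [DecidableEq α] [DecidableEq β]
    (ρ : Matrix (α × β) (α × β) ℂ) : ℝ :=
  if h : (ptB ρ).IsHermitian then ∑ i, max 0 (- h.eigenvalues i) else 0

/-- A family of vectors is an orthonormal basis family (orthonormal, indexed by the
same finite type as the dimension, hence a basis). -/
def IsONB {n : Type*} [Fintype n] [DecidableEq n] (x : n → n → ℂ) : Prop :=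
  ∀ j k, cinner (x j) (x k) = if j = k then 1 else 0

/-- Separability: a finite convex combination of projectors onto product unit vectors. -/
def IsSeparableDM {α β : Type*} [Fintype α] [Fintype β]
    (ρ : Matrix (α × β) (α × β) ℂ) : Prop :=
  ∃ (m : ℕ) (p : Fin m → ℝ) (a : Fin m → α → ℂ) (b : Fin m → β → ℂ),
    (∀ j, 0 ≤ p j) ∧ (∑ j, p j = 1) ∧
    (∀ j, cinner (a j) (a j) = 1) ∧ (∀ j, cinner (b j) (b j) = 1) ∧
    ρ = ∑ j, (p j : ℂ) • vecProj (tensorVec (a j) (b j))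

/-- A maximally entangled state on `ℂ^d ⊗ ℂ^d`. -/
def IsMaxEnt {d : ℕ} (Ψ : Fin d × Fin d → ℂ) : Prop :=
  ∃ x y : Fin d → Fin d → ℂ, IsONB x ∧ IsONB y ∧
    Ψ = ((Real.sqrt d : ℂ)⁻¹) • ∑ j, tensorVec (x j) (y j)


lemma cinner_smul_right {n : Type*} [Fintype n] (v w : n → ℂ) (c : ℂ) :
    cinner v (c • w) = c * cinner v w := by
  simp [cinner, Finset.mul_sum]
  exact Finset.sum_congr rfl fun i _ => by ring

lemma cinner_sum_right {n : Type*} [Fintype n] {m : Type*} (s : Finset m)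
    (v : n → ℂ) (w : m → n → ℂ) :
    cinner v (∑ j ∈ s, w j) = ∑ j ∈ s, cinner v (w j) := by
  simp only [cinner, Finset.sum_apply, Finset.mul_sum]
  exact Finset.sum_comm

lemma cinner_proj {n : Type*} [Fintype n] (v Ψ : n → ℂ) :
    cinner Ψ ((vecProj v) *ᵥ Ψ) = (Complex.normSq (cinner v Ψ) : ℂ) := by
  rw [Complex.normSq_eq_conj_mul_self]
  simp only [cinner, vecProj, Matrix.mulVec, dotProduct, Matrix.of_apply,
    map_sum, map_mul, Complex.conj_conj]
  calc ∑ i, (starRingEnd ℂ) (Ψ i) * ∑ q, v i * (starRingEnd ℂ) (v q) * Ψ q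
      = ∑ i, ((starRingEnd ℂ) (Ψ i) * v i) * ∑ q, (starRingEnd ℂ) (v q) * Ψ q := by
        refine Finset.sum_congr rfl fun i _ => ?_
        rw [Finset.mul_sum, Finset.mul_sum]
        exact Finset.sum_congr rfl fun q _ => by ring
    _ = (∑ i, (starRingEnd ℂ) (Ψ i) * v i) * ∑ q, (starRingEnd ℂ) (v q) * Ψ q := by
        rw [Finset.sum_mul]
    _ = (∑ x, v x * (starRingEnd ℂ) (Ψ x)) * ∑ i, (starRingEnd ℂ) (v i) * Ψ i := by
        congr 1
        exact Finset.sum_congr rfl fun i _ => mul_comm _ _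

lemma cinner_tensor {α β : Type*} [Fintype α] [Fintype β]
    (a : α → ℂ) (b : β → ℂ) (u : α → ℂ) (w : β → ℂ) :
    cinner (tensorVec a b) (tensorVec u w) = cinner a u * cinner b w := by
  simp only [cinner, tensorVec, Finset.sum_mul_sum, Fintype.sum_prod_type]
  exact Finset.sum_congr rfl fun i _ => Finset.sum_congr rfl fun q _ => by
    simp [map_mul]; ring

lemma cs_sum (d : ℕ) (c e : Fin d → ℂ) :
    Complex.normSq (∑ k, c k * e k) ≤ (∑ k, Complex.normSq (c k)) * (∑ k, Complex.normSq (e k)) := by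
  let u : EuclideanSpace ℂ (Fin d) := WithLp.toLp 2 (fun k => (starRingEnd ℂ) (c k))
  let v : EuclideanSpace ℂ (Fin d) := WithLp.toLp 2 e
  have h1 : (inner ℂ u v : ℂ) = ∑ k, c k * e k := by
    simp [u, v, PiLp.inner_apply, RCLike.inner_apply, mul_comm]
  have h2 := norm_inner_le_norm (𝕜 := ℂ) u v
  have hh := mul_self_le_mul_self (norm_nonneg _) h2
  rw [h1] at hh
  have hu : ‖u‖ * ‖u‖ = ∑ k, Complex.normSq (c k) := by
    rw [EuclideanSpace.norm_eq, Real.mul_self_sqrt (by positivity)]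
    congr 1; ext k
    simp [u, Complex.normSq_eq_norm_sq]
  have hv : ‖v‖ * ‖v‖ = ∑ k, Complex.normSq (e k) := by
    rw [EuclideanSpace.norm_eq, Real.mul_self_sqrt (by positivity)]
    congr 1; ext k
    simp [v, Complex.normSq_eq_norm_sq]
  calc Complex.normSq (∑ k, c k * e k) = ‖∑ k, c k * e k‖ * ‖∑ k, c k * e k‖ := by
        rw [Complex.normSq_eq_norm_sq, sq]
    _ ≤ (‖u‖ * ‖v‖) * (‖u‖ * ‖v‖) := hh
    _ = (‖u‖*‖u‖) * (‖v‖*‖v‖) := by ring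
    _ = _ := by rw [hu, hv]

lemma col_onb {d : ℕ} (x : Fin d → Fin d → ℂ) (hx : IsONB x) (i i' : Fin d) :
    ∑ j, (starRingEnd ℂ) (x j i) * x j i' = if i = i' then 1 else 0 := by
  have hM : (Matrix.of x) * (Matrix.of x)ᴴ = 1 := by
    ext j k
    simp only [Matrix.mul_apply, Matrix.conjTranspose_apply, Matrix.of_apply, Matrix.one_apply]
    have h : ∑ i, x j i * star (x k i) = (starRingEnd ℂ) (cinner (x j) (x k)) := by
      simp only [cinner, map_sum, map_mul, Complex.conj_conj]
      rfl
    rw [h, hx j k]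
    split <;> simp [Complex.star_def, mul_comm]
  have hM2 : (Matrix.of x)ᴴ * (Matrix.of x) = 1 := mul_eq_one_comm.mp hM
  have h := congrFun (congrFun hM2 i) i'
  simpa [Matrix.mul_apply, Matrix.conjTranspose_apply, Matrix.one_apply, Complex.star_def] using h

lemma parseval {d : ℕ} (x : Fin d → Fin d → ℂ) (hx : IsONB x) (a : Fin d → ℂ) :
    ∑ j, (Complex.normSq (cinner a (x j)) : ℂ) = cinner a a := by
  have expand : ∀ j, (Complex.normSq (cinner a (x j)) : ℂ)
      = ∑ i, ∑ i', a i * (starRingEnd ℂ) (a i') * ((starRingEnd ℂ) (x j i) * x j i') := by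
    intro j
    rw [Complex.normSq_eq_conj_mul_self]
    simp only [cinner, map_sum, map_mul, Complex.conj_conj, Finset.sum_mul_sum]
    exact Finset.sum_congr rfl fun i _ => Finset.sum_congr rfl fun i' _ => by ring
  simp only [expand]
  rw [Finset.sum_comm]
  have : ∀ i, ∑ j, ∑ i', a i * (starRingEnd ℂ) (a i') * ((starRingEnd ℂ) (x j i) * x j i')
      = a i * (starRingEnd ℂ) (a i) := by
    intro i
    rw [Finset.sum_comm]
    have : ∀ i', ∑ j, a i * (starRingEnd ℂ) (a i') * ((starRingEnd ℂ) (x j i) * x j i')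
        = a i * (starRingEnd ℂ) (a i') * (if i = i' then 1 else 0) := by
      intro i'
      rw [← Finset.mul_sum, col_onb x hx]
    simp only [this, mul_ite, mul_one, mul_zero, Finset.sum_ite_eq, Finset.mem_univ, if_true]
  simp only [this, cinner]
  exact Finset.sum_congr rfl fun i _ => mul_comm _ _

lemma parseval_real {d : ℕ} (x : Fin d → Fin d → ℂ) (hx : IsONB x) (a : Fin d → ℂ)
    (ha : cinner a a = 1) :
    ∑ j, Complex.normSq (cinner a (x j)) = 1 := by
  have := parseval x hx a
  rw [ha] at this
  exact_mod_cast this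


/-- for a separable density matrix `ρ` on `ℂ^d ⊗ ℂ^d` and a maximally
entangled state `Ψ`, the expectation value satisfies `⟨Ψ, ρ Ψ⟩ ≤ 1/d`. -/
theorem separable_expectation_maxEnt_le (d : ℕ) (hd : 1 ≤ d)
    (ρ : Matrix (Fin d × Fin d) (Fin d × Fin d) ℂ)
    (hρ : IsDensityMatrix ρ) (hsep : IsSeparableDM ρ)
    (Ψ : Fin d × Fin d → ℂ) (hΨ : IsMaxEnt Ψ) :
    cinner Ψ (ρ *ᵥ Ψ) ≤ ((d : ℂ))⁻¹ := by
  obtain ⟨m, p, a, b, hp, hpsum, ha, hb, hrho⟩ := hsep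
  obtain ⟨x, y, hx, hy, hPsi⟩ := hΨ
  have hd0 : (0:ℝ) < d := by exact_mod_cast hd
  set S : Fin m → ℂ := fun j => ∑ k, cinner (a j) (x k) * cinner (b j) (y k) with hS
  have hvΨ : ∀ j, cinner (tensorVec (a j) (b j)) Ψ = ((Real.sqrt d : ℂ))⁻¹ * S j := by
    intro j
    rw [hPsi, cinner_smul_right, cinner_sum_right]
    congr 1
    exact Finset.sum_congr rfl fun k _ => cinner_tensor _ _ _ _
  have hbound : ∀ j, Complex.normSq (cinner (tensorVec (a j) (b j)) Ψ) ≤ (d : ℝ)⁻¹ := by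
    intro j
    rw [hvΨ j, Complex.normSq_mul]
    have h1 : Complex.normSq ((Real.sqrt d : ℂ))⁻¹ = (d : ℝ)⁻¹ := by
      rw [Complex.normSq_inv, Complex.normSq_ofReal, Real.mul_self_sqrt hd0.le]
    rw [h1]
    have h2 : Complex.normSq (S j) ≤ 1 := by
      calc Complex.normSq (S j)
          ≤ (∑ k, Complex.normSq (cinner (a j) (x k))) *
            (∑ k, Complex.normSq (cinner (b j) (y k))) := cs_sum d _ _
        _ = 1 := by
            rw [parseval_real x hx _ (ha j), parseval_real y hy _ (hb j), one_mul]
    calc (d:ℝ)⁻¹ * Complex.normSq (S j) ≤ (d:ℝ)⁻¹ * 1 :=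
          mul_le_mul_of_nonneg_left h2 (by positivity)
      _ = (d:ℝ)⁻¹ := mul_one _
  have hexp : cinner Ψ (ρ *ᵥ Ψ)
      = ((∑ j, p j * Complex.normSq (cinner (tensorVec (a j) (b j)) Ψ) : ℝ) : ℂ) := by
    rw [hrho]
    have hmv : (∑ j, (p j : ℂ) • vecProj (tensorVec (a j) (b j))) *ᵥ Ψ
        = ∑ j, (p j : ℂ) • (vecProj (tensorVec (a j) (b j)) *ᵥ Ψ) := by
      ext i
      simp only [Matrix.mulVec, dotProduct, Finset.sum_apply, Pi.smul_apply,
        Matrix.sum_apply, Matrix.smul_apply, smul_eq_mul, Finset.sum_mul]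
      rw [Finset.sum_comm]
      exact Finset.sum_congr rfl fun j _ => by rw [Finset.mul_sum]; exact Finset.sum_congr rfl fun q _ => by ring
    rw [hmv, cinner_sum_right]
    rw [Complex.ofReal_sum]
    refine Finset.sum_congr rfl fun j _ => ?_
    rw [cinner_smul_right, cinner_proj, Complex.ofReal_mul]
  rw [hexp]
  have hcast : ((d : ℂ))⁻¹ = (((d : ℝ)⁻¹ : ℝ) : ℂ) := by push_cast; ring
  rw [hcast, Complex.real_le_real]
  calc ∑ j, p j * Complex.normSq (cinner (tensorVec (a j) (b j)) Ψ)
      ≤ ∑ j, p j * (d:ℝ)⁻¹ :=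
        Finset.sum_le_sum fun j _ => mul_le_mul_of_nonneg_left (hbound j) (hp j)
    _ = (d:ℝ)⁻¹ := by rw [← Finset.sum_mul, hpsum, one_mul]


end
end

section
/- Let ρ and σ be density matrices on ℂ^{d_{AB}} ⊗ ℂ^{d_C} (matrices indexed by pairs (i,k)). Then the Uhlmann root fidelity is monotone under the partial trace over the second factor: F(ρ, σ) ≤ F(tr_C ρ, tr_C σ). -/
open scoped Matrix Kronecker ComplexOrder

noncomputable section

namespace MyFid
open Matrix

variable {n : Type*} [Fintype n] [DecidableEq n]

/-- Crude functional calculus for a Hermitian matrix. -/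
def hcfc {P : Matrix n n ℂ} (hP : P.IsHermitian) (f : ℝ → ℂ) : Matrix n n ℂ :=
  (hP.eigenvectorUnitary : Matrix n n ℂ) * diagonal (f ∘ hP.eigenvalues) *
    (star (hP.eigenvectorUnitary : Matrix n n ℂ))

variable {P : Matrix n n ℂ} (hP : P.IsHermitian)

lemma hcfc_mul (f g : ℝ → ℂ) : hcfc hP f * hcfc hP g = hcfc hP (f * g) := by
  have h1 : (star (hP.eigenvectorUnitary : Matrix n n ℂ)) *
      (hP.eigenvectorUnitary : Matrix n n ℂ) = 1 :=
    (Matrix.mem_unitaryGroup_iff').mp (hP.eigenvectorUnitary).2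
  simp only [hcfc, Matrix.mul_assoc]
  rw [← Matrix.mul_assoc (star (hP.eigenvectorUnitary : Matrix n n ℂ)) _ _, h1,
    Matrix.one_mul, ← Matrix.mul_assoc (diagonal (f ∘ hP.eigenvalues)) _ _,
    diagonal_mul_diagonal]
  rfl

lemma hcfc_id : hcfc hP (fun x => (x : ℂ)) = P := by
  conv_rhs => rw [hP.spectral_theorem]
  rw [Unitary.conjStarAlgAut_apply]; rfl

lemma hcfc_one : hcfc hP (fun _ => 1) = 1 := by
  have h1 : (hP.eigenvectorUnitary : Matrix n n ℂ) *
      (star (hP.eigenvectorUnitary : Matrix n n ℂ)) = 1 :=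
    (Matrix.mem_unitaryGroup_iff).mp (hP.eigenvectorUnitary).2
  rw [hcfc]
  have : diagonal ((fun _ => (1:ℂ)) ∘ hP.eigenvalues) = 1 := diagonal_one
  rw [this, Matrix.mul_one, h1]

lemma hcfc_sub (f g : ℝ → ℂ) : hcfc hP f - hcfc hP g = hcfc hP (f - g) := by
  simp only [hcfc]
  have : diagonal ((f - g) ∘ hP.eigenvalues)
      = diagonal (f ∘ hP.eigenvalues) - diagonal (g ∘ hP.eigenvalues) := by
    rw [diagonal_sub]; rfl
  rw [this, Matrix.mul_sub, Matrix.sub_mul]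

lemma hcfc_conjTranspose (f : ℝ → ℂ) : (hcfc hP f)ᴴ = hcfc hP (fun x => star (f x)) := by
  simp only [hcfc, conjTranspose_mul, conjTranspose_conjTranspose, diagonal_conjTranspose,
    star_eq_conjTranspose, Matrix.mul_assoc]
  rfl

lemma hcfc_isHermitian (f : ℝ → ℂ) (hf : ∀ x, star (f x) = f x) :
    (hcfc hP f).IsHermitian := by
  rw [Matrix.IsHermitian, hcfc_conjTranspose]
  simp [hf]

lemma hcfc_posSemidef (f : ℝ → ℂ) (hf : ∀ x, 0 ≤ f x) : (hcfc hP f).PosSemidef := by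
  have hd : (Matrix.diagonal (f ∘ hP.eigenvalues)).PosSemidef :=
    Matrix.PosSemidef.diagonal (fun i => hf _)
  have := hd.mul_mul_conjTranspose_same (hP.eigenvectorUnitary : Matrix n n ℂ)
  simpa [hcfc, star_eq_conjTranspose, Matrix.mul_assoc] using this

lemma hcfc_trace (f : ℝ → ℂ) : (hcfc hP f).trace = ∑ i, f (hP.eigenvalues i) := by
  have h1 : (star (hP.eigenvectorUnitary : Matrix n n ℂ)) *
      (hP.eigenvectorUnitary : Matrix n n ℂ) = 1 :=
    (Matrix.mem_unitaryGroup_iff').mp (hP.eigenvectorUnitary).2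
  rw [hcfc, Matrix.trace_mul_comm, ← Matrix.mul_assoc, h1, Matrix.one_mul, Matrix.trace_diagonal]
  rfl

/-- square root of a positive semidefinite matrix -/
def _root_.Matrix.PosSemidef.sqrt {A : Matrix n n ℂ} (hA : A.PosSemidef) : Matrix n n ℂ :=
  hcfc hA.1 (fun x => ((√x : ℝ) : ℂ))

lemma _root_.Matrix.PosSemidef.posSemidef_sqrt {A : Matrix n n ℂ} (hA : A.PosSemidef) :
    hA.sqrt.PosSemidef :=
  hcfc_posSemidef hA.1 _ (fun x => Complex.zero_le_real.mpr (Real.sqrt_nonneg x))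

lemma _root_.Matrix.PosSemidef.sqrt_mul_self {A : Matrix n n ℂ} (hA : A.PosSemidef) :
    hA.sqrt * hA.sqrt = A := by
  unfold Matrix.PosSemidef.sqrt
  rw [hcfc_mul]
  conv_rhs => rw [← hcfc_id hA.1]
  unfold hcfc
  congr 3
  funext i
  simp only [Function.comp_apply, Pi.mul_apply]
  rw [← Complex.ofReal_mul, Real.mul_self_sqrt (hA.eigenvalues_nonneg i)]


section pinv
open Classical in
/-- indicator of nonzero eigenvalues -/
def indFun : ℝ → ℂ := fun x => if x = 0 then 0 else 1

/-- pseudo-inverse of a Hermitian matrix -/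
def pinv {P : Matrix n n ℂ} (hP : P.IsHermitian) : Matrix n n ℂ :=
  hcfc hP (fun x => ((x : ℂ))⁻¹)

/-- spectral projection onto the range -/
def sproj {P : Matrix n n ℂ} (hP : P.IsHermitian) : Matrix n n ℂ := hcfc hP indFun

lemma indFun_eval (x : ℝ) : ((x:ℂ))⁻¹ * (x:ℂ) = indFun x := by
  rcases eq_or_ne x 0 with h | h <;> simp [indFun, h]

lemma pinv_mul_self : pinv hP * P = sproj hP := by
  unfold pinv sproj
  have h := hcfc_mul hP (fun x : ℝ => ((x:ℂ))⁻¹) (fun x : ℝ => (x:ℂ))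
  rw [hcfc_id hP] at h
  have hfg : ((fun x : ℝ => ((x:ℂ))⁻¹) * fun x : ℝ => (x:ℂ)) = indFun := by
    funext x; exact indFun_eval x
  rw [hfg] at h
  exact h

lemma self_mul_pinv : P * pinv hP = sproj hP := by
  unfold pinv sproj
  have h := hcfc_mul hP (fun x : ℝ => (x:ℂ)) (fun x : ℝ => ((x:ℂ))⁻¹)
  rw [hcfc_id hP] at h
  have hfg : ((fun x : ℝ => (x:ℂ)) * fun x : ℝ => ((x:ℂ))⁻¹) = indFun := by
    funext x; rw [← indFun_eval x]; exact mul_comm _ _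
  rw [hfg] at h
  exact h

lemma self_mul_sproj : P * sproj hP = P := by
  unfold sproj
  have h := hcfc_mul hP (fun x : ℝ => (x:ℂ)) indFun
  rw [hcfc_id hP] at h
  have hfg : ((fun x : ℝ => (x:ℂ)) * indFun) = fun x : ℝ => (x:ℂ) := by
    funext x; rcases eq_or_ne x 0 with h0 | h0 <;> simp [indFun, h0]
  rw [hfg, hcfc_id hP] at h
  exact h

lemma sproj_mul_self : sproj hP * P = P := by
  unfold sproj
  have h := hcfc_mul hP indFun (fun x : ℝ => (x:ℂ))
  rw [hcfc_id hP] at h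
  have hfg : (indFun * fun x : ℝ => (x:ℂ)) = fun x : ℝ => (x:ℂ) := by
    funext x; rcases eq_or_ne x 0 with h0 | h0 <;> simp [indFun, h0]
  rw [hfg, hcfc_id hP] at h
  exact h

lemma pinv_isHermitian : (pinv hP).IsHermitian := by
  apply hcfc_isHermitian
  intro x
  rw [← Complex.ofReal_inv, Complex.star_def, Complex.conj_ofReal]

lemma sproj_isHermitian : (sproj hP).IsHermitian := by
  apply hcfc_isHermitian
  intro x
  rcases eq_or_ne x 0 with h | h <;> simp [indFun, h]

lemma one_sub_sproj_posSemidef : (1 - sproj hP).PosSemidef := by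
  rw [show (1 : Matrix n n ℂ) = hcfc hP (fun _ => 1) from (hcfc_one hP).symm, sproj,
    hcfc_sub]
  apply hcfc_posSemidef
  intro x
  rcases eq_or_ne x 0 with h | h <;> simp [indFun, h]

lemma pinv_mul_self_mul_self : pinv hP * P * P = P := by
  rw [pinv_mul_self, sproj_mul_self]

lemma self_mul_self_mul_pinv : P * (P * pinv hP) = P := by
  rw [self_mul_pinv, self_mul_sproj]

end pinv

section contraction

/-- Euclidean norm of a vector. -/
def nrm {ν : Type*} [Fintype ν] (v : ν → ℂ) : ℝ := ‖(WithLp.equiv 2 (ν → ℂ)).symm v‖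

lemma dot_inner {ν : Type*} [Fintype ν] (v w : ν → ℂ) :
    star v ⬝ᵥ w = (inner ℂ ((WithLp.equiv 2 (ν → ℂ)).symm v) ((WithLp.equiv 2 (ν → ℂ)).symm w) : ℂ) := by
  rw [dotProduct_comm]; rfl

lemma dot_self_eq_nrm_sq {ν : Type*} [Fintype ν] (v : ν → ℂ) :
    star v ⬝ᵥ v = ((nrm v : ℂ))^2 := by
  rw [dot_inner, inner_self_eq_norm_sq_to_K, nrm]
  norm_num

variable {l k : Type*} [Fintype l] [Fintype k]
omit [DecidableEq n]

/-- Contraction property: `Cᴴ C ≤ 1`. -/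
def Contr (C : Matrix l n ℂ) : Prop :=
  ∀ x : n → ℂ, star (C *ᵥ x) ⬝ᵥ (C *ᵥ x) ≤ star x ⬝ᵥ x

lemma dot_conjTranspose_mulVec (C : Matrix l n ℂ) (x : n → ℂ) (y : l → ℂ) :
    star x ⬝ᵥ (Cᴴ *ᵥ y) = star (C *ᵥ x) ⬝ᵥ y := by
  rw [Matrix.dotProduct_mulVec, Matrix.star_mulVec]

lemma contr_iff_posSemidef {ν : Type*} [Fintype ν] [DecidableEq ν] {C : Matrix l ν ℂ} :
    Contr C ↔ (1 - Cᴴ * C).PosSemidef := by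
  have key : ∀ x : ν → ℂ, star x ⬝ᵥ ((1 - Cᴴ * C) *ᵥ x)
      = star x ⬝ᵥ x - star (C *ᵥ x) ⬝ᵥ (C *ᵥ x) := by
    intro x
    rw [Matrix.sub_mulVec, dotProduct_sub, Matrix.one_mulVec, ← Matrix.mulVec_mulVec,
      dot_conjTranspose_mulVec]
  constructor
  · intro h
    refine Matrix.PosSemidef.of_dotProduct_mulVec_nonneg ?_ (fun x => by rw [key x]; exact sub_nonneg.mpr (h x))
    have : (Cᴴ * C).IsHermitian := Matrix.isHermitian_conjTranspose_mul_self C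
    exact Matrix.IsHermitian.sub (Matrix.isHermitian_one) this
  · intro h x
    have := h.dotProduct_mulVec_nonneg x
    rw [key x] at this
    exact sub_nonneg.mp this

lemma Contr.nrm_le {C : Matrix l n ℂ} (h : Contr C) (x : n → ℂ) :
    nrm (C *ᵥ x) ≤ nrm x := by
  have := h x
  rw [dot_self_eq_nrm_sq, dot_self_eq_nrm_sq] at this
  have h2 : (nrm (C *ᵥ x))^2 ≤ (nrm x)^2 := by exact_mod_cast this
  have h0 : (0:ℝ) ≤ nrm x := norm_nonneg _
  nlinarith [norm_nonneg ((WithLp.equiv 2 _).symm (C *ᵥ x))]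

lemma contr_of_nrm {C : Matrix l n ℂ} (h : ∀ x, nrm (C *ᵥ x) ≤ nrm x) : Contr C := by
  intro x
  rw [dot_self_eq_nrm_sq, dot_self_eq_nrm_sq]
  have h2 : (nrm (C *ᵥ x))^2 ≤ (nrm x)^2 :=
    pow_le_pow_left₀ (norm_nonneg _) (h x) 2
  exact_mod_cast Complex.real_le_real.mpr h2

lemma Contr.mul {C : Matrix l n ℂ} {D : Matrix n k ℂ} (hC : Contr C) (hD : Contr D) :
    Contr (C * D) := by
  apply contr_of_nrm
  intro x
  rw [← Matrix.mulVec_mulVec]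
  exact le_trans (hC.nrm_le _) (hD.nrm_le x)

lemma Contr.conjTranspose {C : Matrix l n ℂ} (h : Contr C) : Contr Cᴴ := by
  apply contr_of_nrm
  intro x
  set y := Cᴴ *ᵥ x with hy
  rcases eq_or_lt_of_le (norm_nonneg ((WithLp.equiv 2 _).symm y)) with h0 | h0
  · rw [nrm, ← h0]; exact norm_nonneg _
  · have key : ((nrm y : ℂ))^2 = star (C *ᵥ y) ⬝ᵥ x := by
      rw [← dot_self_eq_nrm_sq, hy, dot_conjTranspose_mulVec]
    have habs : (nrm y)^2 ≤ nrm (C *ᵥ y) * nrm x := by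
      have h1 : ‖((nrm y : ℂ))^2‖ ≤ nrm (C *ᵥ y) * nrm x := by
        rw [key, dot_inner]
        exact norm_inner_le_norm _ _
      simpa [norm_pow, Complex.norm_real, abs_of_nonneg (norm_nonneg _), nrm] using h1
    have h2 : nrm (C *ᵥ y) ≤ nrm y := h.nrm_le y
    have h3 : (nrm y)^2 ≤ nrm y * nrm x :=
      le_trans habs (mul_le_mul_of_nonneg_right h2 (norm_nonneg _))
    have h4 : nrm y * nrm y ≤ nrm y * nrm x := by rw [← pow_two]; exact h3
    exact le_of_mul_le_mul_left h4 h0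

end contraction

lemma re_dot_le_one {C : Matrix n n ℂ} (hC : Contr C) (u : n → ℂ) (hu : star u ⬝ᵥ u = 1) :
    (star u ⬝ᵥ (C *ᵥ u)).re ≤ 1 := by
  have hn : nrm u = 1 := by
    have h1 := dot_self_eq_nrm_sq u
    rw [hu] at h1
    have h2 : (nrm u)^2 = 1 := by exact_mod_cast h1.symm
    have h0 : (0:ℝ) ≤ nrm u := norm_nonneg _
    nlinarith
  have h1 : ‖star u ⬝ᵥ (C *ᵥ u)‖ ≤ 1 := by
    rw [dot_inner]
    calc ‖(inner ℂ ((WithLp.equiv 2 (n → ℂ)).symm u) ((WithLp.equiv 2 (n → ℂ)).symm (C *ᵥ u)) : ℂ)‖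
        ≤ nrm u * nrm (C *ᵥ u) := norm_inner_le_norm _ _
      _ ≤ nrm u * nrm u := by
          exact mul_le_mul_of_nonneg_left (hC.nrm_le u) (norm_nonneg _)
      _ = 1 := by rw [hn]; ring
  exact le_trans (Complex.re_le_norm _) h1

lemma re_trace_mul_le {P C : Matrix n n ℂ} (hP : P.PosSemidef) (hC : Contr C) :
    ((C * P).trace).re ≤ (P.trace).re := by
  have hH := hP.1
  set U : Matrix n n ℂ := (hH.eigenvectorUnitary : Matrix n n ℂ) with hUdef
  set d : n → ℝ := hH.eigenvalues with hddef
  have hU : star U * U = 1 := (Matrix.mem_unitaryGroup_iff').mp hH.eigenvectorUnitary.2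
  have htrP : P.trace = ∑ i, (d i : ℂ) := by
    rw [← hcfc_id hH, hcfc_trace]
  have hPspec : P = hcfc hH (fun x : ℝ => (x:ℂ)) := (hcfc_id hH).symm
  unfold hcfc at hPspec
  have htr : (C * P).trace = ∑ i, (star U * C * U) i i * (d i : ℂ) := by
    rw [hPspec]
    have e1 : C * (U * Matrix.diagonal ((fun x : ℝ => (x:ℂ)) ∘ d) * star U)
        = (C * U * Matrix.diagonal ((fun x : ℝ => (x:ℂ)) ∘ d)) * star U := by
      simp [Matrix.mul_assoc]
    rw [e1, Matrix.trace_mul_comm, ← Matrix.mul_assoc, ← Matrix.mul_assoc]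
    simp [Matrix.trace, Matrix.diag, Matrix.mul_diagonal, Function.comp]
  have hdiag : ∀ i, ((star U * C * U) i i).re ≤ 1 := by
    intro i
    have hcol : star (fun a => U a i) ⬝ᵥ (fun a => U a i) = 1 := by
      have h2 := congrFun (congrFun hU i) i
      simpa [Matrix.mul_apply, Matrix.one_apply, dotProduct, Matrix.star_apply,
        Pi.star_apply] using h2
    have hentry : (star U * C * U) i i = star (fun a => U a i) ⬝ᵥ (C *ᵥ (fun a => U a i)) := by
      simp only [Matrix.mul_apply, Matrix.mulVec, dotProduct, Matrix.star_apply,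
        Pi.star_apply, Finset.sum_mul, Finset.mul_sum]
      rw [Finset.sum_comm]
      apply Finset.sum_congr rfl
      intro a _
      apply Finset.sum_congr rfl
      intro b _
      ring
    rw [hentry]
    exact re_dot_le_one hC _ hcol
  have hd0 : ∀ i, 0 ≤ d i := fun i => hP.eigenvalues_nonneg i
  rw [htr, htrP, Complex.re_sum, Complex.re_sum]
  apply Finset.sum_le_sum
  intro i _
  have : ((star U * C * U) i i * (d i : ℂ)).re = ((star U * C * U) i i).re * d i := by
    simp [Complex.mul_re]
  rw [this]
  simpa using mul_le_mul_of_nonneg_right (hdiag i) (hd0 i)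

lemma sproj_mul_sproj : sproj hP * sproj hP = sproj hP := by
  unfold sproj
  rw [hcfc_mul]
  have hfg : indFun * indFun = indFun := by
    funext x; rcases eq_or_ne x 0 with h | h <;> simp [indFun, h]
  rw [hfg]

section core
variable {l : Type*} [Fintype l]

lemma factor_through {S : Matrix n n ℂ} (hS : S.PosSemidef)
    (R₁ : Matrix l n ℂ) (h : R₁ᴴ * R₁ = S * S) : R₁ * (pinv hS.1 * S) = R₁ := by
  have hzero : S * (1 - pinv hS.1 * S) = 0 := by
    rw [Matrix.mul_sub, Matrix.mul_one, ← Matrix.mul_assoc, self_mul_pinv, sproj_mul_self,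
      sub_self]
  have hzz : (R₁ * (1 - pinv hS.1 * S))ᴴ * (R₁ * (1 - pinv hS.1 * S)) = 0 := by
    rw [Matrix.conjTranspose_mul]
    calc (1 - pinv hS.1 * S)ᴴ * R₁ᴴ * (R₁ * (1 - pinv hS.1 * S))
        = (1 - pinv hS.1 * S)ᴴ * (R₁ᴴ * R₁) * (1 - pinv hS.1 * S) := by
          simp [Matrix.mul_assoc]
      _ = (S * (1 - pinv hS.1 * S))ᴴ * (S * (1 - pinv hS.1 * S)) := by
          rw [h, Matrix.conjTranspose_mul, hS.1.eq]
          simp [Matrix.mul_assoc]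
      _ = 0 := by rw [hzero]; simp
  have hz := Matrix.conjTranspose_mul_self_eq_zero.mp hzz
  rw [Matrix.mul_sub, Matrix.mul_one] at hz
  exact (sub_eq_zero.mp hz).symm

lemma core_ineq {A B X : Matrix n n ℂ} (hA : A.PosSemidef) (hB : B.PosSemidef)
    (hABA : (hA.sqrt * B * hA.sqrt).PosSemidef)
    (hT : (Matrix.fromBlocks A X Xᴴ B).PosSemidef) :
    (X.trace).re ≤ (hABA.sqrt.trace).re := by
  set SA := hA.sqrt with hSAdef
  set SB := hB.sqrt with hSBdef
  have hSA : SA.PosSemidef := hA.posSemidef_sqrt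
  have hSB : SB.PosSemidef := hB.posSemidef_sqrt
  have hSAA : SA * SA = A := hA.sqrt_mul_self
  have hSBB : SB * SB = B := hB.sqrt_mul_self
  set R := hT.sqrt with hRdef
  have hRH : R.IsHermitian := hT.posSemidef_sqrt.1
  have hRR : Rᴴ * R = Matrix.fromBlocks A X Xᴴ B := by
    rw [hRH.eq]; exact hT.sqrt_mul_self
  set R₁ : Matrix (n ⊕ n) n ℂ := Matrix.of (fun q j => R q (Sum.inl j)) with hR1
  set R₂ : Matrix (n ⊕ n) n ℂ := Matrix.of (fun q j => R q (Sum.inr j)) with hR2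
  have h11 : R₁ᴴ * R₁ = A := by
    ext j j'
    calc (R₁ᴴ * R₁) j j' = (Rᴴ * R) (Sum.inl j) (Sum.inl j') := by
          simp [Matrix.mul_apply, Matrix.conjTranspose_apply, hR1]
      _ = A j j' := by rw [hRR]; rfl
  have h22 : R₂ᴴ * R₂ = B := by
    ext j j'
    calc (R₂ᴴ * R₂) j j' = (Rᴴ * R) (Sum.inr j) (Sum.inr j') := by
          simp [Matrix.mul_apply, Matrix.conjTranspose_apply, hR2]
      _ = B j j' := by rw [hRR]; rfl
  have h12 : R₁ᴴ * R₂ = X := by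
    ext j j'
    calc (R₁ᴴ * R₂) j j' = (Rᴴ * R) (Sum.inl j) (Sum.inr j') := by
          simp [Matrix.mul_apply, Matrix.conjTranspose_apply, hR1, hR2]
      _ = X j j' := by rw [hRR]; rfl
  set V₁ := R₁ * pinv hSA.1 with hV1def
  set V₂ := R₂ * pinv hSB.1 with hV2def
  have hV1 : V₁ * SA = R₁ := by
    have := factor_through hSA R₁ (by rw [h11, hSAA])
    rw [← Matrix.mul_assoc] at this; exact this
  have hV2 : V₂ * SB = R₂ := by
    have := factor_through hSB R₂ (by rw [h22, hSBB])
    rw [← Matrix.mul_assoc] at this; exact this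
  have hV1c : Contr V₁ := by
    rw [contr_iff_posSemidef]
    have hv : V₁ᴴ * V₁ = sproj hSA.1 := by
      rw [hV1def, Matrix.conjTranspose_mul, (pinv_isHermitian hSA.1).eq]
      calc pinv hSA.1 * R₁ᴴ * (R₁ * pinv hSA.1)
          = pinv hSA.1 * (R₁ᴴ * R₁) * pinv hSA.1 := by simp [Matrix.mul_assoc]
        _ = (pinv hSA.1 * SA) * (SA * pinv hSA.1) := by
            rw [h11, ← hSAA]; simp [Matrix.mul_assoc]
        _ = sproj hSA.1 := by
            rw [pinv_mul_self, self_mul_pinv, sproj_mul_sproj]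
    rw [hv]
    exact one_sub_sproj_posSemidef hSA.1
  have hV2c : Contr V₂ := by
    rw [contr_iff_posSemidef]
    have hv : V₂ᴴ * V₂ = sproj hSB.1 := by
      rw [hV2def, Matrix.conjTranspose_mul, (pinv_isHermitian hSB.1).eq]
      calc pinv hSB.1 * R₂ᴴ * (R₂ * pinv hSB.1)
          = pinv hSB.1 * (R₂ᴴ * R₂) * pinv hSB.1 := by simp [Matrix.mul_assoc]
        _ = (pinv hSB.1 * SB) * (SB * pinv hSB.1) := by
            rw [h22, ← hSBB]; simp [Matrix.mul_assoc]
        _ = sproj hSB.1 := by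
            rw [pinv_mul_self, self_mul_pinv, sproj_mul_sproj]
    rw [hv]
    exact one_sub_sproj_posSemidef hSB.1
  set K := V₁ᴴ * V₂ with hKdef
  have hKc : Contr K := Contr.mul hV1c.conjTranspose hV2c
  have hX : X = SA * K * SB := by
    rw [← h12, ← hV1, ← hV2, hKdef, Matrix.conjTranspose_mul, hSA.1.eq]
    simp [Matrix.mul_assoc]
  set M := SB * SA with hMdef
  have hMM : Mᴴ * M = SA * B * SA := by
    rw [hMdef, Matrix.conjTranspose_mul, hSA.1.eq, hSB.1.eq, ← hSBB]
    simp [Matrix.mul_assoc]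
  set P := hABA.sqrt with hPdef
  have hPP : P.PosSemidef := hABA.posSemidef_sqrt
  have hPsq : P * P = SA * B * SA := hABA.sqrt_mul_self
  set W := M * pinv hPP.1 with hWdef
  have hW : W * P = M := by
    have := factor_through hPP M (by rw [hMM, hPsq])
    rw [← Matrix.mul_assoc] at this; exact this
  have hWc : Contr W := by
    rw [contr_iff_posSemidef]
    have hv : Wᴴ * W = sproj hPP.1 := by
      rw [hWdef, Matrix.conjTranspose_mul, (pinv_isHermitian hPP.1).eq]
      calc pinv hPP.1 * Mᴴ * (M * pinv hPP.1)
          = pinv hPP.1 * (Mᴴ * M) * pinv hPP.1 := by simp [Matrix.mul_assoc]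
        _ = (pinv hPP.1 * P) * (P * pinv hPP.1) := by
            rw [hMM, ← hPsq]; simp [Matrix.mul_assoc]
        _ = sproj hPP.1 := by
            rw [pinv_mul_self, self_mul_pinv, sproj_mul_sproj]
    rw [hv]
    exact one_sub_sproj_posSemidef hPP.1
  have htr : X.trace = ((K * W) * P).trace := by
    rw [hX, Matrix.trace_mul_cycle, ← hMdef, Matrix.trace_mul_comm, ← hW, ← Matrix.mul_assoc]
  rw [htr]
  exact re_trace_mul_le hPP (hKc.mul hWc)

end core

lemma posSemidef_fromBlocks_zeros {D : Matrix n n ℂ} (hD : D.PosSemidef) :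
    (Matrix.fromBlocks (0 : Matrix n n ℂ) 0 0 D).PosSemidef := by
  refine Matrix.PosSemidef.of_dotProduct_mulVec_nonneg ?_ ?_
  · unfold Matrix.IsHermitian
    rw [Matrix.fromBlocks_conjTranspose]
    simp [hD.1.eq]
  · intro x
    have h := hD.dotProduct_mulVec_nonneg (x ∘ Sum.inr)
    have e : star x ⬝ᵥ ((Matrix.fromBlocks (0 : Matrix n n ℂ) 0 0 D) *ᵥ x)
        = star (x ∘ Sum.inr) ⬝ᵥ (D *ᵥ (x ∘ Sum.inr)) := by
      simp [Matrix.fromBlocks_mulVec, dotProduct, Fintype.sum_sum_type, Function.comp]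
    rw [e]; exact h

lemma exists_tight_block {ρ σ : Matrix n n ℂ} (hρ : ρ.PosSemidef) (hσ : σ.PosSemidef)
    (hG : (hρ.sqrt * σ * hρ.sqrt).PosSemidef) :
    ∃ X, (Matrix.fromBlocks ρ X Xᴴ σ).PosSemidef ∧ X.trace = hG.sqrt.trace := by
  set SA := hρ.sqrt with hSAdef
  set SB := hσ.sqrt with hSBdef
  have hSA : SA.PosSemidef := hρ.posSemidef_sqrt
  have hSB : SB.PosSemidef := hσ.posSemidef_sqrt
  have hSAA : SA * SA = ρ := hρ.sqrt_mul_self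
  have hSBB : SB * SB = σ := hσ.sqrt_mul_self
  set M := SB * SA with hM
  have hMM : Mᴴ * M = SA * σ * SA := by
    rw [hM, Matrix.conjTranspose_mul, hSA.1.eq, hSB.1.eq, ← hSBB]
    simp [Matrix.mul_assoc]
  set P := hG.sqrt with hPdef
  have hPP : P.PosSemidef := hG.posSemidef_sqrt
  have hPsq : P * P = SA * σ * SA := hG.sqrt_mul_self
  set U := pinv hPP.1 * Mᴴ with hU
  have hUM : U * M = P := by
    rw [hU, Matrix.mul_assoc, hMM, ← hPsq, ← Matrix.mul_assoc, pinv_mul_self, sproj_mul_self]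
  have hUc : Contr U := by
    have hUadj : Contr Uᴴ := by
      rw [contr_iff_posSemidef]
      have hadj : Uᴴ = M * pinv hPP.1 := by
        rw [hU, Matrix.conjTranspose_mul (pinv hPP.1) Mᴴ, (pinv_isHermitian hPP.1).eq,
          Matrix.conjTranspose_conjTranspose]
      have hv : Uᴴᴴ * Uᴴ = sproj hPP.1 := by
        rw [Matrix.conjTranspose_conjTranspose, hU, hadj]
        calc pinv hPP.1 * Mᴴ * (M * pinv hPP.1)
            = pinv hPP.1 * (Mᴴ * M) * pinv hPP.1 := by simp [Matrix.mul_assoc]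
          _ = (pinv hPP.1 * P) * (P * pinv hPP.1) := by
              rw [hMM, ← hPsq]; simp [Matrix.mul_assoc]
          _ = sproj hPP.1 := by rw [pinv_mul_self, self_mul_pinv, sproj_mul_sproj]
      rw [hv]
      exact one_sub_sproj_posSemidef hPP.1
    have := hUadj.conjTranspose
    rwa [Matrix.conjTranspose_conjTranspose] at this
  refine ⟨SA * U * SB, ?_, ?_⟩
  · have hsplit : Matrix.fromBlocks ρ (SA*U*SB) (SA*U*SB)ᴴ σ
        = (Matrix.fromBlocks SA (U*SB) 0 0)ᴴ * (Matrix.fromBlocks SA (U*SB) 0 0)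
          + Matrix.fromBlocks 0 0 0 (σ - (U*SB)ᴴ*(U*SB)) := by
      rw [Matrix.fromBlocks_conjTranspose, Matrix.fromBlocks_multiply, Matrix.fromBlocks_add]
      simp only [Matrix.mul_zero, Matrix.zero_mul, add_zero, zero_add,
        Matrix.conjTranspose_mul, Matrix.conjTranspose_zero, hSA.1.eq, hSB.1.eq, hSAA,
        Matrix.mul_assoc, add_sub_cancel]
    rw [hsplit]
    apply Matrix.PosSemidef.add
    · exact Matrix.posSemidef_conjTranspose_mul_self _
    · apply posSemidef_fromBlocks_zeros
      have h1 : (1 - Uᴴ*U).PosSemidef := contr_iff_posSemidef.mp hUc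
      have h2 := h1.conjTranspose_mul_mul_same SB
      have e : SBᴴ * (1 - Uᴴ*U) * SB = σ - (U*SB)ᴴ*(U*SB) := by
        rw [Matrix.conjTranspose_mul U SB, Matrix.mul_sub, Matrix.sub_mul, Matrix.mul_one,
          hSB.1.eq, hSBB]
        noncomm_ring
      rwa [e] at h2
  · calc (SA * U * SB).trace = (SB * (SA * U)).trace := by
          rw [Matrix.trace_mul_comm]
      _ = (U * M).trace := by
          rw [hM, ← Matrix.mul_assoc, Matrix.trace_mul_comm]
      _ = P.trace := by rw [hUM]

end MyFid

namespace MyFid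
section ptrace
variable {α γ : Type*} [Fintype α] [Fintype γ] [DecidableEq α] [DecidableEq γ]

lemma ptraceC_conjTranspose (T : Matrix (α × γ) (α × γ) ℂ) :
    (ptraceC T)ᴴ = ptraceC Tᴴ := by
  ext i j
  simp [ptraceC, Matrix.conjTranspose_apply]

lemma ptraceC_posSemidef {T : Matrix (α × γ) (α × γ) ℂ} (hT : T.PosSemidef) :
    (ptraceC T).PosSemidef := by
  refine Matrix.PosSemidef.of_dotProduct_mulVec_nonneg ?_ ?_
  · rw [Matrix.IsHermitian, ptraceC_conjTranspose, hT.1.eq]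
  · intro x
    have key : star x ⬝ᵥ (ptraceC T *ᵥ x)
        = ∑ k, star (fun p : α × γ => if p.2 = k then x p.1 else 0) ⬝ᵥ
            (T *ᵥ (fun p : α × γ => if p.2 = k then x p.1 else 0)) := by
      simp only [dotProduct, Matrix.mulVec, ptraceC, Matrix.of_apply, Pi.star_apply,
        Fintype.sum_prod_type, apply_ite (star : ℂ → ℂ), mul_ite, ite_mul, zero_mul, mul_zero,
        star_zero, Finset.sum_ite_eq', Finset.sum_ite_eq, Finset.mem_univ, if_true, Finset.mul_sum, Finset.sum_mul]
      conv_rhs => rw [Finset.sum_comm]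
      refine Finset.sum_congr rfl fun a _ => ?_
      have hcollapse : ∀ y : γ,
          (∑ k : γ, ∑ b : α, if k = y then star (x a) * (T (a, k) (b, y) * x b) else 0)
            = ∑ b : α, star (x a) * (T (a, y) (b, y) * x b) := by
        intro y
        rw [Finset.sum_comm]
        simp [Finset.sum_ite_eq', Finset.mem_univ]
      simp only [hcollapse]
      rw [Finset.sum_comm]
    rw [key]
    exact Finset.sum_nonneg fun k _ => hT.dotProduct_mulVec_nonneg _

/-- reindexing equivalence -/
def blkEquiv (α γ : Type*) : ((α ⊕ α) × γ) ≃ ((α × γ) ⊕ (α × γ)) where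
  toFun p := Sum.elim (fun a => Sum.inl (a, p.2)) (fun a => Sum.inr (a, p.2)) p.1
  invFun q := Sum.elim (fun pc => (Sum.inl pc.1, pc.2)) (fun pc => (Sum.inr pc.1, pc.2)) q
  left_inv p := by rcases p with ⟨a | a, k⟩ <;> rfl
  right_inv q := by rcases q with ⟨a, k⟩ | ⟨a, k⟩ <;> rfl

lemma blocks_ptrace_posSemidef {ρ X σ : Matrix (α × γ) (α × γ) ℂ}
    (h : (Matrix.fromBlocks ρ X Xᴴ σ).PosSemidef) :
    (Matrix.fromBlocks (ptraceC ρ) (ptraceC X) (ptraceC X)ᴴ (ptraceC σ)).PosSemidef := by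
  have hsub := h.submatrix (blkEquiv α γ)
  have h2 := ptraceC_posSemidef hsub
  have hident : ptraceC ((Matrix.fromBlocks ρ X Xᴴ σ).submatrix (blkEquiv α γ) (blkEquiv α γ))
      = Matrix.fromBlocks (ptraceC ρ) (ptraceC X) (ptraceC Xᴴ) (ptraceC σ) := by
    ext q r
    rcases q with i | i <;> rcases r with j | j <;>
      simp [ptraceC, Matrix.submatrix_apply, blkEquiv]
  rw [hident] at h2
  rwa [ptraceC_conjTranspose]

end ptrace
end MyFid

/-- the Uhlmann root fidelity is monotone under the partial trace over
the second factor. -/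
theorem rootFidelity_le_rootFidelity_ptrace (dAB dC : ℕ)
    (ρ σ : Matrix (Fin dAB × Fin dC) (Fin dAB × Fin dC) ℂ)
    (hρ : IsDensityMatrix ρ) (hσ : IsDensityMatrix σ) :
    rootFidelity ρ σ ≤ rootFidelity (ptraceC ρ) (ptraceC σ) := by
  obtain ⟨hρp, -⟩ := hρ
  obtain ⟨hσp, -⟩ := hσ
  have hmsρ : msqrt ρ = hρp.sqrt := by unfold msqrt; rw [dif_pos hρp]; rfl
  have hG' : (hρp.sqrt * σ * hρp.sqrt).PosSemidef := by
    have := hσp.mul_mul_conjTranspose_same hρp.sqrt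
    rwa [hρp.posSemidef_sqrt.1.eq] at this
  have hA' : (ptraceC ρ).PosSemidef := MyFid.ptraceC_posSemidef hρp
  have hB' : (ptraceC σ).PosSemidef := MyFid.ptraceC_posSemidef hσp
  have hmsA : msqrt (ptraceC ρ) = hA'.sqrt := by unfold msqrt; rw [dif_pos hA']; rfl
  have hABA : (hA'.sqrt * ptraceC σ * hA'.sqrt).PosSemidef := by
    have := hB'.mul_mul_conjTranspose_same hA'.sqrt
    rwa [hA'.posSemidef_sqrt.1.eq] at this
  obtain ⟨X, hblk, htr⟩ := MyFid.exists_tight_block hρp hσp hG'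
  have h2 := MyFid.blocks_ptrace_posSemidef hblk
  have h3 := MyFid.core_ineq hA' hB' hABA h2
  have htrX : (X.trace).re = ((ptraceC X).trace).re := by
    have : (ptraceC X).trace = X.trace := by
      simp [Matrix.trace, Matrix.diag, ptraceC, Fintype.sum_prod_type]
    rw [this]
  unfold rootFidelity
  rw [hmsρ, hmsA]
  unfold msqrt
  rw [dif_pos hG', dif_pos hABA]
  change (hG'.sqrt.trace).re ≤ (hABA.sqrt.trace).re
  rw [← htr, htrX]
  exact h3


end
end

section
/- Let d ≥ 1 and let ρ be a density matrix on ℂ^d ⊗ ℂ^d. Then the negativity of ρ with respect to the bipartition into the two tensor factors satisfies N(ρ) ≤ (d−1)/2. -/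
open scoped Matrix Kronecker ComplexOrder

noncomputable section

/-- The trace of a Hermitian matrix is the sum of its eigenvalues. -/
lemma trace_eq_sum_eig {n : Type*} [Fintype n] [DecidableEq n] (A : Matrix n n ℂ)
    (hA : A.IsHermitian) : A.trace = ∑ i, (hA.eigenvalues i : ℂ) := by
  set U := (hA.eigenvectorUnitary : Matrix n n ℂ) with hU
  have hsUU : star U * U = 1 := Matrix.mem_unitaryGroup_iff'.mp hA.eigenvectorUnitary.2
  calc A.trace
      = (U * Matrix.diagonal (RCLike.ofReal ∘ hA.eigenvalues) * star U).trace := by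
        exact congrArg Matrix.trace hA.spectral_theorem
    _ = (Matrix.diagonal (RCLike.ofReal ∘ hA.eigenvalues) * (star U * U)).trace := by
        rw [Matrix.trace_mul_cycle, ← mul_assoc, Matrix.trace_mul_cycle, mul_assoc]
    _ = ∑ i, (hA.eigenvalues i : ℂ) := by rw [hsUU, mul_one, Matrix.trace_diagonal]; rfl

/-- The trace of the square of a Hermitian matrix is the sum of the squares of its
eigenvalues. -/
lemma trace_sq_eq_sum_eig {n : Type*} [Fintype n] [DecidableEq n] (A : Matrix n n ℂ)
    (hA : A.IsHermitian) : (A * A).trace = ∑ i, (hA.eigenvalues i : ℂ) ^ 2 := by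
  set U := (hA.eigenvectorUnitary : Matrix n n ℂ) with hU
  have hsUU : star U * U = 1 := Matrix.mem_unitaryGroup_iff'.mp hA.eigenvectorUnitary.2
  set D := Matrix.diagonal (RCLike.ofReal ∘ hA.eigenvalues : n → ℂ) with hD
  have hA2 : A * A = U * (D * D) * star U := by
    conv_lhs => rw [hA.spectral_theorem]
    calc U * D * star U * (U * D * star U) = U * (D * ((star U * U) * D)) * star U := by
          simp only [mul_assoc]
      _ = U * (D * D) * star U := by rw [hsUU, one_mul]
  rw [hA2, Matrix.trace_mul_cycle, ← mul_assoc, hsUU, one_mul, hD,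
    Matrix.diagonal_mul_diagonal, Matrix.trace_diagonal]
  simp [sq]

/-- the negativity of any density matrix on `ℂ^d ⊗ ℂ^d` is at most
`(d-1)/2`. -/
theorem negativity_le (d : ℕ) (hd : 1 ≤ d)
    (ρ : Matrix (Fin d × Fin d) (Fin d × Fin d) ℂ) (hρ : IsDensityMatrix ρ) :
    negativity ρ ≤ ((d : ℝ) - 1) / 2 := by
  classical
  obtain ⟨hpsd, htr⟩ := hρ
  have hρher : ρ.IsHermitian := hpsd.1
  have hsym : ∀ a b, star (ρ a b) = ρ b a := fun a b => by
    conv_rhs => rw [← hρher]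
    simp [Matrix.conjTranspose_apply]
  have hH : (ptB ρ).IsHermitian := by
    ext p q
    simp only [Matrix.conjTranspose_apply, ptB, Matrix.of_apply]
    exact hsym _ _
  set lam := hH.eigenvalues with hlam
  set mu := hρher.eigenvalues with hmu
  -- trace of ptB ρ equals trace of ρ
  have htrH : (ptB ρ).trace = 1 := by
    rw [← htr]
    simp only [Matrix.trace, Matrix.diag, ptB, Matrix.of_apply]
  have hS1c : ∑ i, (lam i : ℂ) = 1 := by rw [← trace_eq_sum_eig _ hH, htrH]
  have hS1 : ∑ i, lam i = 1 := by exact_mod_cast hS1c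
  -- sum of eigenvalues of ρ
  have hmuS : ∑ i, mu i = 1 := by
    have : ∑ i, (mu i : ℂ) = 1 := by rw [← trace_eq_sum_eig _ hρher, htr]
    exact_mod_cast this
  have hmupos : ∀ i, 0 ≤ mu i := hpsd.eigenvalues_nonneg
  -- Frobenius: tr(H²) = tr(ρ²)
  have hfrob : ((ptB ρ) * (ptB ρ)).trace = (ρ * ρ).trace := by
    have h1 : ((ptB ρ) * (ptB ρ)).trace
        = ∑ pq : (Fin d × Fin d) × (Fin d × Fin d), ptB ρ pq.1 pq.2 * ptB ρ pq.2 pq.1 := by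
      simp only [Matrix.trace, Matrix.diag, Matrix.mul_apply]
      rw [← Finset.sum_product']
      rfl
    have h2 : (ρ * ρ).trace
        = ∑ pq : (Fin d × Fin d) × (Fin d × Fin d), ρ pq.1 pq.2 * ρ pq.2 pq.1 := by
      simp only [Matrix.trace, Matrix.diag, Matrix.mul_apply]
      rw [← Finset.sum_product']
      rfl
    rw [h1, h2]
    have hinv : Function.Involutive
        (fun pq : (Fin d × Fin d) × (Fin d × Fin d) =>
          (((pq.1.1, pq.2.2), (pq.2.1, pq.1.2)) : (Fin d × Fin d) × (Fin d × Fin d))) := by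
      intro pq; rfl
    exact Fintype.sum_bijective _ hinv.bijective _ _ (fun pq => rfl)
  have hS2c : ∑ i, (lam i : ℂ) ^ 2 = ∑ i, (mu i : ℂ) ^ 2 := by
    rw [← trace_sq_eq_sum_eig _ hH, ← trace_sq_eq_sum_eig _ hρher, hfrob]
  have hS2 : ∑ i, (lam i) ^ 2 = ∑ i, (mu i) ^ 2 := by exact_mod_cast hS2c
  have hmu2 : ∑ i, (mu i) ^ 2 ≤ 1 := by
    have := Finset.sum_sq_le_sq_sum_of_nonneg (s := Finset.univ) (f := mu)
      (fun i _ => hmupos i)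
    rwa [hmuS, one_pow] at this
  have hS2le : ∑ i, (lam i) ^ 2 ≤ 1 := hS2 ▸ hmu2
  -- negativity
  have hneg : negativity ρ = ∑ i, max 0 (- lam i) := by
    rw [negativity, dif_pos hH]
  set N := ∑ i, max 0 (- lam i) with hN
  have hNnn : 0 ≤ N := Finset.sum_nonneg fun i _ => le_max_left _ _
  have habs : ∑ i, |lam i| = 1 + 2 * N := by
    have : ∀ i, |lam i| = lam i + 2 * max 0 (- lam i) := by
      intro i
      rcases le_total 0 (lam i) with h | h
      · rw [abs_of_nonneg h, max_eq_left (by linarith)]; ring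
      · rw [abs_of_nonpos h, max_eq_right (by linarith)]; ring
    rw [Finset.sum_congr rfl fun i _ => this i, Finset.sum_add_distrib, hS1,
      ← Finset.mul_sum]
  have hcard : (Finset.univ : Finset (Fin d × Fin d)).card = d * d := by simp
  have hCS : (∑ i, |lam i|) ^ 2 ≤ (d * d : ℝ) * ∑ i, (lam i) ^ 2 := by
    have := sq_sum_le_card_mul_sum_sq (s := Finset.univ) (f := fun i => |lam i|)
    simp only [sq_abs] at this
    rw [hcard] at this
    exact_mod_cast this
  have hkey : (1 + 2 * N) ^ 2 ≤ (d : ℝ) ^ 2 := by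
    rw [← habs]
    calc (∑ i, |lam i|) ^ 2 ≤ (d * d : ℝ) * ∑ i, (lam i) ^ 2 := hCS
      _ ≤ (d * d : ℝ) * 1 := by
          apply mul_le_mul_of_nonneg_left hS2le; positivity
      _ = (d : ℝ) ^ 2 := by ring
  have hd1 : (1 : ℝ) ≤ d := by exact_mod_cast hd
  rw [hneg]
  nlinarith [hkey, hNnn, hd1]

end
end
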